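/- In the same setup, the residual R = A X̃ − X̃ X̃ᵀ A X̃ (with A = ÂÂᵀ and X̃ the left singular vectors of D̂) satisfies ‖R‖₂ ≤ Δ̂_max · sqrt(ε̂₀), where Δ̂_max = ‖D̂‖₂ and ε̂₀ = ‖D̄ᵀD̄‖₂ with D̄ = Â − D̂. -/

import Mathlib

open scoped BigOperators
open Matrix

noncomputable def frobNorm {r s : ℕ} (M : Matrix (Fin r) (Fin s) ℝ) : ℝ :=
  Real.sqrt (∑ i, ∑ j, M i j ^ 2)

noncomputable def specNorm {r s : ℕ} (M : Matrix (Fin r) (Fin s) ℝ) : ℝ :=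
  sSup {c : ℝ | ∃ x : Fin s → ℝ, (∑ j, x j ^ 2) = 1 ∧
    c = Real.sqrt (∑ i, (M.mulVec x i) ^ 2)}

/-- `σ` enumerates the singular values of `M` in nonincreasing order,
    padded with zeros beyond index `s`. -/
def IsSingularValues {r s : ℕ} (M : Matrix (Fin r) (Fin s) ℝ) (σ : ℕ → ℝ) : Prop :=
  Antitone σ ∧ (∀ i, 0 ≤ σ i) ∧ (∀ i, s ≤ i → σ i = 0) ∧
  ∀ hH : (Mᵀ * M).IsHermitian,
    Multiset.map (fun i : Fin s => σ (i : ℕ) ^ 2) Finset.univ.val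
      = Multiset.map hH.eigenvalues Finset.univ.val

section Helpers

lemma mulVec_dot {r s : ℕ} (M : Matrix (Fin r) (Fin s) ℝ) (x : Fin s → ℝ) (y : Fin r → ℝ) :
    (M *ᵥ x) ⬝ᵥ y = x ⬝ᵥ (Mᵀ *ᵥ y) := by
  simp only [dotProduct, mulVec, dotProduct, transpose_apply, Finset.sum_mul, Finset.mul_sum]
  rw [Finset.sum_comm]
  exact Finset.sum_congr rfl fun _ _ => Finset.sum_congr rfl fun _ _ => by ring

lemma sumsq_nonneg {k : ℕ} (v : Fin k → ℝ) : 0 ≤ ∑ i, v i ^ 2 :=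
  Finset.sum_nonneg fun i _ => sq_nonneg _

lemma dot_eq_sumsq {k : ℕ} (v : Fin k → ℝ) : v ⬝ᵥ v = ∑ i, v i ^ 2 := by
  simp [dotProduct, sq]

lemma dot_le_sqrt_mul_sqrt {k : ℕ} (v w : Fin k → ℝ) :
    v ⬝ᵥ w ≤ Real.sqrt (∑ i, v i ^ 2) * Real.sqrt (∑ i, w i ^ 2) := by
  calc v ⬝ᵥ w ≤ |∑ i, v i * w i| := le_abs_self _
    _ = Real.sqrt ((∑ i, v i * w i) ^ 2) := (Real.sqrt_sq_eq_abs _).symm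
    _ ≤ Real.sqrt ((∑ i, v i ^ 2) * (∑ i, w i ^ 2)) :=
        Real.sqrt_le_sqrt (Finset.sum_mul_sq_le_sq_mul_sq _ _ _)
    _ = _ := Real.sqrt_mul (sumsq_nonneg v) _

lemma specNorm_nonneg {r s : ℕ} (M : Matrix (Fin r) (Fin s) ℝ) : 0 ≤ specNorm M := by
  apply Real.sSup_nonneg
  rintro c ⟨x, hx, rfl⟩
  exact Real.sqrt_nonneg _

lemma specNorm_bddAbove {r s : ℕ} (M : Matrix (Fin r) (Fin s) ℝ) :
    BddAbove {c : ℝ | ∃ x : Fin s → ℝ, (∑ j, x j ^ 2) = 1 ∧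
      c = Real.sqrt (∑ i, (M.mulVec x i) ^ 2)} := by
  refine ⟨Real.sqrt (∑ i, ∑ j, M i j ^ 2), ?_⟩
  rintro c ⟨x, hx, rfl⟩
  apply Real.sqrt_le_sqrt
  apply Finset.sum_le_sum
  intro i _
  calc (M.mulVec x i) ^ 2 = (∑ j, M i j * x j) ^ 2 := by rfl
    _ ≤ (∑ j, M i j ^ 2) * (∑ j, x j ^ 2) := Finset.sum_mul_sq_le_sq_mul_sq _ _ _
    _ = ∑ j, M i j ^ 2 := by rw [hx, mul_one]

lemma le_specNorm {r s : ℕ} (M : Matrix (Fin r) (Fin s) ℝ) (x : Fin s → ℝ)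
    (hx : (∑ j, x j ^ 2) = 1) :
    Real.sqrt (∑ i, (M.mulVec x i) ^ 2) ≤ specNorm M :=
  le_csSup (specNorm_bddAbove M) ⟨x, hx, rfl⟩

lemma mulVec_sqrt_le {r s : ℕ} (M : Matrix (Fin r) (Fin s) ℝ) (x : Fin s → ℝ) :
    Real.sqrt (∑ i, (M.mulVec x i) ^ 2) ≤ specNorm M * Real.sqrt (∑ j, x j ^ 2) := by
  by_cases hx : (∑ j, x j ^ 2) = 0
  · have hx0 : x = 0 := by
      funext j
      have := (Finset.sum_eq_zero_iff_of_nonneg (fun i _ => sq_nonneg (x i))).mp hx j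
        (Finset.mem_univ j)
      exact pow_eq_zero_iff (two_ne_zero) |>.mp this
    simp [hx0, hx]
  · have hpos : 0 < ∑ j, x j ^ 2 := lt_of_le_of_ne (sumsq_nonneg x) (Ne.symm hx)
    set t := Real.sqrt (∑ j, x j ^ 2) with ht
    have htpos : 0 < t := Real.sqrt_pos.mpr hpos
    set x' : Fin s → ℝ := t⁻¹ • x with hx'
    have hx'1 : (∑ j, x' j ^ 2) = 1 := by
      simp only [hx', Pi.smul_apply, smul_eq_mul, mul_pow, ← Finset.mul_sum]
      have ht2 : t ^ 2 = ∑ j, x j ^ 2 := Real.sq_sqrt hpos.le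
      rw [← ht2, inv_pow]
      exact inv_mul_cancel₀ (pow_ne_zero _ htpos.ne')
    have hmv : M.mulVec x = t • M.mulVec x' := by
      rw [hx', Matrix.mulVec_smul]
      rw [smul_smul, mul_inv_cancel₀ htpos.ne', one_smul]
    have : Real.sqrt (∑ i, (M.mulVec x i) ^ 2)
        = t * Real.sqrt (∑ i, (M.mulVec x' i) ^ 2) := by
      rw [hmv]
      simp only [Pi.smul_apply, smul_eq_mul, mul_pow, ← Finset.mul_sum]
      rw [Real.sqrt_mul (sq_nonneg t), Real.sqrt_sq htpos.le]
    rw [this, mul_comm (specNorm M) t]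
    exact mul_le_mul_of_nonneg_left (le_specNorm M x' hx'1) htpos.le

lemma rayleigh_bound {k : ℕ} (N : Matrix (Fin k) (Fin k) ℝ) (hN : N.IsHermitian) (c : ℝ)
    (hc : ∀ i, hN.eigenvalues i ≤ c) (w : Fin k → ℝ) :
    w ⬝ᵥ (N *ᵥ w) ≤ c * ∑ i, w i ^ 2 := by
  classical
  set U : Matrix (Fin k) (Fin k) ℝ := (hN.eigenvectorUnitary : Matrix (Fin k) (Fin k) ℝ) with hU
  have hUstar : star U = Uᵀ := by
    ext i j; simp [Matrix.conjTranspose_apply]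
  have hUU : U * star U = 1 := (Matrix.mem_unitaryGroup_iff).mp hN.eigenvectorUnitary.2
  set v : Fin k → ℝ := Uᵀ *ᵥ w with hv
  have hD : N = U * Matrix.diagonal hN.eigenvalues * Uᵀ := by
    have := hN.spectral_theorem
    simp only [Unitary.conjStarAlgAut_apply, Unitary.coe_star] at this
    rw [hUstar] at this
    simpa [RCLike.ofReal_real_eq_id] using this
  have hNw : w ⬝ᵥ (N *ᵥ w) = ∑ i, hN.eigenvalues i * v i ^ 2 := by
    conv_lhs => rw [hD, ← Matrix.mulVec_mulVec, ← Matrix.mulVec_mulVec]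
    rw [dotProduct_comm, mulVec_dot U _ w]
    simp only [dotProduct, Matrix.mulVec_diagonal, ← hv]
    exact Finset.sum_congr rfl fun i _ => by ring
  have hww : (∑ i, w i ^ 2) = ∑ i, v i ^ 2 := by
    have h1 : w ⬝ᵥ w = v ⬝ᵥ v := by
      calc w ⬝ᵥ w = w ⬝ᵥ ((U * star U) *ᵥ w) := by rw [hUU, Matrix.one_mulVec]
        _ = (U *ᵥ (Uᵀ *ᵥ w)) ⬝ᵥ w := by rw [hUstar, ← Matrix.mulVec_mulVec, dotProduct_comm]
        _ = (Uᵀ *ᵥ w) ⬝ᵥ (Uᵀ *ᵥ w) := by rw [mulVec_dot]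
        _ = v ⬝ᵥ v := rfl
    simpa [dotProduct, sq] using h1
  rw [hNw, hww, Finset.mul_sum]
  exact Finset.sum_le_sum fun i _ =>
    mul_le_mul_of_nonneg_right (hc i) (sq_nonneg _)

end Helpers

theorem residual_norm_bound {m n h : ℕ} (hh : 0 < h)
    (A : Matrix (Fin m) (Fin n) ℝ)
    (Xt : Matrix (Fin m) (Fin h) ℝ) (hXt : Xtᵀ * Xt = 1)
    (Dh Db : Matrix (Fin m) (Fin n) ℝ)
    (hDh : Dh = Xt * Xtᵀ * A) (hDb : Db = A - Dh)
    (σh : ℕ → ℝ) (hσh : IsSingularValues Dh σh)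
    (Δmax : ℝ) (hΔmax : Δmax = σh 0)
    (εh₀ : ℝ) (hεh₀ : εh₀ = specNorm (Dbᵀ * Db))
    (R : Matrix (Fin m) (Fin h) ℝ)
    (hR : R = (A * Aᵀ) * Xt - Xt * (Xtᵀ * (A * Aᵀ) * Xt)) :
    specNorm R ≤ Δmax * Real.sqrt εh₀ := by
  obtain ⟨hanti, hpos, hzero, hmulti⟩ := hσh
  have hσ0 : 0 ≤ σh 0 := hpos 0
  -- eigenvalue bound for DhᵀDh
  have hH : (Dhᵀ * Dh).IsHermitian := by simpa using Matrix.isHermitian_conjTranspose_mul_self Dh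
  have heig : ∀ i, hH.eigenvalues i ≤ σh 0 ^ 2 := by
    intro i
    have hmem : hH.eigenvalues i ∈ Multiset.map hH.eigenvalues Finset.univ.val :=
      Multiset.mem_map_of_mem _ (Finset.mem_univ_val i)
    rw [← hmulti hH] at hmem
    obtain ⟨j, _, hj⟩ := Multiset.mem_map.mp hmem
    rw [← hj]
    exact pow_le_pow_left₀ (hpos _) (hanti (Nat.zero_le _)) 2
  -- operator bound for Dh
  have hDhb : ∀ w : Fin n → ℝ,
      Real.sqrt (∑ i, (Dh *ᵥ w) i ^ 2) ≤ σh 0 * Real.sqrt (∑ j, w j ^ 2) := by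
    intro w
    have h1 : (∑ i, (Dh *ᵥ w) i ^ 2) ≤ σh 0 ^ 2 * ∑ j, w j ^ 2 := by
      have h2 : (Dh *ᵥ w) ⬝ᵥ (Dh *ᵥ w) = w ⬝ᵥ ((Dhᵀ * Dh) *ᵥ w) := by
        rw [mulVec_dot Dh w (Dh *ᵥ w), Matrix.mulVec_mulVec]
      rw [← dot_eq_sumsq, h2]
      exact rayleigh_bound _ hH _ heig w
    calc Real.sqrt (∑ i, (Dh *ᵥ w) i ^ 2) ≤ Real.sqrt (σh 0 ^ 2 * ∑ j, w j ^ 2) :=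
          Real.sqrt_le_sqrt h1
      _ = σh 0 * Real.sqrt (∑ j, w j ^ 2) := by
          rw [Real.sqrt_mul (sq_nonneg _), Real.sqrt_sq hσ0]
  -- operator bound for Dhᵀ
  have hDhTb : ∀ z : Fin m → ℝ,
      Real.sqrt (∑ j, (Dhᵀ *ᵥ z) j ^ 2) ≤ σh 0 * Real.sqrt (∑ i, z i ^ 2) := by
    intro z
    set w : Fin n → ℝ := Dhᵀ *ᵥ z with hw
    by_cases hw0 : Real.sqrt (∑ j, w j ^ 2) = 0
    · rw [hw0]
      positivity
    · have hwpos : 0 < Real.sqrt (∑ j, w j ^ 2) :=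
        lt_of_le_of_ne (Real.sqrt_nonneg _) (Ne.symm hw0)
      have key : (∑ j, w j ^ 2) ≤ (σh 0 * Real.sqrt (∑ i, z i ^ 2)) * Real.sqrt (∑ j, w j ^ 2) := by
        calc (∑ j, w j ^ 2) = w ⬝ᵥ (Dhᵀ *ᵥ z) := by rw [← hw, dot_eq_sumsq]
          _ = (Dh *ᵥ w) ⬝ᵥ z := (mulVec_dot Dh w z).symm
          _ ≤ Real.sqrt (∑ i, (Dh *ᵥ w) i ^ 2) * Real.sqrt (∑ i, z i ^ 2) :=
              dot_le_sqrt_mul_sqrt _ _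
          _ ≤ (σh 0 * Real.sqrt (∑ j, w j ^ 2)) * Real.sqrt (∑ i, z i ^ 2) :=
              mul_le_mul_of_nonneg_right (hDhb w) (Real.sqrt_nonneg _)
          _ = (σh 0 * Real.sqrt (∑ i, z i ^ 2)) * Real.sqrt (∑ j, w j ^ 2) := by ring
      have hsq : Real.sqrt (∑ j, w j ^ 2) * Real.sqrt (∑ j, w j ^ 2) = ∑ j, w j ^ 2 :=
        Real.mul_self_sqrt (sumsq_nonneg w)
      nlinarith [hwpos]
  -- operator bound for Db
  have hDbb : ∀ y : Fin n → ℝ,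
      Real.sqrt (∑ i, (Db *ᵥ y) i ^ 2) ≤ Real.sqrt εh₀ * Real.sqrt (∑ j, y j ^ 2) := by
    intro y
    have h1 : (∑ i, (Db *ᵥ y) i ^ 2) ≤ εh₀ * ∑ j, y j ^ 2 := by
      have h2 : (Db *ᵥ y) ⬝ᵥ (Db *ᵥ y) = y ⬝ᵥ ((Dbᵀ * Db) *ᵥ y) := by
        rw [mulVec_dot Db y (Db *ᵥ y), Matrix.mulVec_mulVec]
      rw [← dot_eq_sumsq, h2]
      calc y ⬝ᵥ ((Dbᵀ * Db) *ᵥ y)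
          ≤ Real.sqrt (∑ j, y j ^ 2) * Real.sqrt (∑ j, ((Dbᵀ * Db) *ᵥ y) j ^ 2) :=
            dot_le_sqrt_mul_sqrt _ _
        _ ≤ Real.sqrt (∑ j, y j ^ 2) * (specNorm (Dbᵀ * Db) * Real.sqrt (∑ j, y j ^ 2)) :=
            mul_le_mul_of_nonneg_left (mulVec_sqrt_le _ _) (Real.sqrt_nonneg _)
        _ = specNorm (Dbᵀ * Db) * (Real.sqrt (∑ j, y j ^ 2) * Real.sqrt (∑ j, y j ^ 2)) := by
            ring
        _ = εh₀ * ∑ j, y j ^ 2 := by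
            rw [Real.mul_self_sqrt (sumsq_nonneg y), hεh₀]
    calc Real.sqrt (∑ i, (Db *ᵥ y) i ^ 2) ≤ Real.sqrt (εh₀ * ∑ j, y j ^ 2) :=
          Real.sqrt_le_sqrt h1
      _ = Real.sqrt εh₀ * Real.sqrt (∑ j, y j ^ 2) := by
          rw [Real.sqrt_mul (hεh₀ ▸ specNorm_nonneg _)]
  -- matrix identity R = Db * Dhᵀ * Xt
  have hRid : R = Db * (Dhᵀ * Xt) := by
    have hXt' : ∀ {p : ℕ} (B : Matrix (Fin h) (Fin p) ℝ), Xtᵀ * (Xt * B) = B := by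
      intro p B
      rw [← Matrix.mul_assoc, hXt, Matrix.one_mul]
    subst hR hDb hDh
    simp only [Matrix.sub_mul, Matrix.transpose_mul, Matrix.transpose_transpose,
      Matrix.mul_assoc, hXt, hXt', Matrix.mul_one]
  -- Xt preserves norms
  have hXtn : ∀ x : Fin h → ℝ, (∑ i, (Xt *ᵥ x) i ^ 2) = ∑ j, x j ^ 2 := by
    intro x
    have : (Xt *ᵥ x) ⬝ᵥ (Xt *ᵥ x) = x ⬝ᵥ x := by
      rw [mulVec_dot, Matrix.mulVec_mulVec, hXt, Matrix.one_mulVec]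
    rw [← dot_eq_sumsq, this, dot_eq_sumsq]
  -- final assembly
  rw [specNorm]
  apply Real.sSup_le
  · rintro c ⟨x, hx, rfl⟩
    have hRx : R *ᵥ x = Db *ᵥ (Dhᵀ *ᵥ (Xt *ᵥ x)) := by
      rw [hRid, ← Matrix.mulVec_mulVec, ← Matrix.mulVec_mulVec]
    calc Real.sqrt (∑ i, (R *ᵥ x) i ^ 2)
        = Real.sqrt (∑ i, (Db *ᵥ (Dhᵀ *ᵥ (Xt *ᵥ x))) i ^ 2) := by rw [hRx]
      _ ≤ Real.sqrt εh₀ * Real.sqrt (∑ j, (Dhᵀ *ᵥ (Xt *ᵥ x)) j ^ 2) := hDbb _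
      _ ≤ Real.sqrt εh₀ * (σh 0 * Real.sqrt (∑ i, (Xt *ᵥ x) i ^ 2)) :=
          mul_le_mul_of_nonneg_left (hDhTb _) (Real.sqrt_nonneg _)
      _ = Real.sqrt εh₀ * (σh 0 * 1) := by rw [hXtn x, hx, Real.sqrt_one]
      _ = Δmax * Real.sqrt εh₀ := by rw [hΔmax]; ring
  · rw [hΔmax]
    positivity
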